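/- For off-diagonal indices $p\neq q\neq k\neq p$ and any $t,u$, the mixed moment of matricially free Gaussian operators satisfies $\Psi_q(\omega_{p,q}(u)\,\omega_{k,p}(t)^4\,\omega_{p,q}(u)) = b_{k,p}(t)^2\, b_{p,q}(u)$, whereas for a diagonal middle operator, $\Psi_q(\omega_{p,q}(u)\,\omega_{p,p}(t)^4\,\omega_{p,q}(u)) = 2\,b_{p,p}(t)^2\, b_{p,q}(u)$. -/

import Mathlib

open ContinuousLinearMap

/-- Basis-index test for nontrivial action of `℘_{p,q}(u)` on the matricially free
Fock space of tracial type (see statement 0 for the encoding of the basis). -/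
def actsOn {r t : ℕ} (q : Fin r) (x : Fin r × List (Fin r × Fin t)) : Bool :=
  match x.2 with
  | [] => x.1 == q
  | (a, _) :: _ => a == q

/-- For matricially free Gaussian operators
`ω_{i,j}(u) = ℘_{i,j}(u) + ℘_{i,j}(u)*` with covariances `b_{i,j}(u) ≥ 0`:
if `p ≠ q ≠ k ≠ p` then `Ψ_q(ω_{p,q}(u) ω_{k,p}(t)⁴ ω_{p,q}(u)) = b_{k,p}(t)² b_{p,q}(u)`,
whereas for the diagonal middle operator (`p ≠ q`)
`Ψ_q(ω_{p,q}(u) ω_{p,p}(t)⁴ ω_{p,q}(u)) = 2 b_{p,p}(t)² b_{p,q}(u)`. -/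
theorem stmt5 {H : Type} [NormedAddCommGroup H] [InnerProductSpace ℂ H] [CompleteSpace H]
    (r t : ℕ) (b : Fin r → Fin r → Fin t → ℝ) (hb : ∀ p q u, 0 ≤ b p q u)
    (e : Fin r × List (Fin r × Fin t) → H) (he : Orthonormal ℂ e)
    (hdense : (Submodule.span ℂ (Set.range e)).topologicalClosure = ⊤)
    (c : Fin r → Fin r → Fin t → H →L[ℂ] H)
    (hc : ∀ p q u x, c p q u (e x) =
      if actsOn q x then (Real.sqrt (b p q u) : ℂ) • e (x.1, (p, u) :: x.2) else 0)
    (om : Fin r → Fin r → Fin t → H →L[ℂ] H)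
    (hom : ∀ i j u, om i j u = c i j u + adjoint (c i j u))
    (p q k : Fin r) (u v : Fin t) (hpq : p ≠ q) :
    (q ≠ k → k ≠ p →
      (@inner ℂ H _ (e (q, ([] : List (Fin r × Fin t))))
        ((om p q u * (om k p v) ^ 4 * om p q u) (e (q, [])))) =
        (((b k p v) ^ 2 * b p q u : ℝ) : ℂ)) ∧
    (@inner ℂ H _ (e (q, ([] : List (Fin r × Fin t))))
        ((om p q u * (om p p v) ^ 4 * om p q u) (e (q, [])))) =
        ((2 * (b p p v) ^ 2 * b p q u : ℝ) : ℂ) := by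
  have hee : ∀ x y, (inner ℂ (e x) (e y) : ℂ) = if x = y then 1 else 0 :=
    orthonormal_iff_ite.mp he
  -- extensionality via dense span
  have hext : ∀ w₁ w₂ : H, (∀ y, (inner ℂ (e y) w₁ : ℂ) = inner ℂ (e y) w₂) → w₁ = w₂ := by
    intro w₁ w₂ hw
    have hbot : (Submodule.span ℂ (Set.range e))ᗮ = ⊥ :=
      Submodule.topologicalClosure_eq_top_iff.mp hdense
    have hmem : w₁ - w₂ ∈ (Submodule.span ℂ (Set.range e))ᗮ := by
      rw [Submodule.mem_orthogonal]
      intro z hz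
      induction hz using Submodule.span_induction with
      | mem z hz =>
        obtain ⟨y, rfl⟩ := hz
        rw [inner_sub_right, hw, sub_self]
      | zero => exact inner_zero_left _
      | add _ _ _ _ h1 h2 => rw [inner_add_left, h1, h2, add_zero]
      | smul a _ _ h1 => rw [inner_smul_left, h1, mul_zero]
    rw [hbot, Submodule.mem_bot, sub_eq_zero] at hmem
    exact hmem
  -- adjoint on basis vectors
  have hadj_nil : ∀ (i j : Fin r) (w : Fin t) (s : Fin r),
      adjoint (c i j w) (e (s, [])) = 0 := by
    intro i j w s
    apply hext
    intro y
    rw [adjoint_inner_right, hc, inner_zero_right]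
    split
    · rw [inner_smul_left, hee]
      simp
    · exact inner_zero_left _
  have hadj_cons : ∀ (i j : Fin r) (w : Fin t) (s a : Fin r) (z : Fin t)
      (l : List (Fin r × Fin t)),
      adjoint (c i j w) (e (s, (a, z) :: l)) =
        if a = i ∧ z = w ∧ actsOn j (s, l) then
          (Real.sqrt (b i j w) : ℂ) • e (s, l) else 0 := by
    intro i j w s a z l
    apply hext
    intro y
    rw [adjoint_inner_right, hc]
    obtain ⟨y1, y2⟩ := y
    by_cases hy : y1 = s ∧ y2 = l
    · obtain ⟨rfl, rfl⟩ := hy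
      by_cases hcond : a = i ∧ z = w ∧ actsOn j (y1, y2)
      · obtain ⟨rfl, rfl, hact⟩ := hcond
        rw [if_pos hact, if_pos ⟨rfl, rfl, hact⟩, inner_smul_left, inner_smul_right,
          hee, hee]
        simp
      · rw [if_neg hcond]
        split
        · rename_i hact
          rw [inner_smul_left, hee, if_neg, mul_zero, inner_zero_right]
          intro hcontra
          apply hcond
          obtain ⟨-, h2⟩ := Prod.mk.injEq .. ▸ hcontra
          obtain ⟨h3, h4⟩ := List.cons.injEq .. ▸ h2
          obtain ⟨h5, h6⟩ := Prod.mk.injEq .. ▸ h3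
          exact ⟨h5.symm, h6.symm, hact⟩
        · rw [inner_zero_left, inner_zero_right]
    · have hne : (y1, y2) ≠ (s, l) := by
        intro hcontra
        exact hy ⟨congrArg Prod.fst hcontra, congrArg Prod.snd hcontra⟩
      have : (inner ℂ (e (y1, y2)) (if a = i ∧ z = w ∧ actsOn j (s, l) then
          (Real.sqrt (b i j w) : ℂ) • e (s, l) else 0) : ℂ) = 0 := by
        split
        · rw [inner_smul_right, hee, if_neg hne, mul_zero]
        · exact inner_zero_right _
      rw [this]
      split
      · rw [inner_smul_left, hee, if_neg, mul_zero]
        intro hcontra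
        apply hy
        obtain ⟨h1, h2⟩ := Prod.mk.injEq .. ▸ hcontra
        obtain ⟨-, h4⟩ := List.cons.injEq .. ▸ h2
        exact ⟨h1, h4⟩
      · exact inner_zero_left _
  have hom' : ∀ (i j : Fin r) (w : Fin t) x,
      om i j w (e x) = c i j w (e x) + adjoint (c i j w) (e x) := by
    intro i j w x; rw [hom]; rfl
  have hpow : ∀ (f : H →L[ℂ] H) (x : H), (f ^ 4) x = f (f (f (f x))) := by
    intro f x
    simp [pow_succ, mul_apply]
  constructor
  · intro hqk hkp
    have h1 : om p q u (e (q, [])) = (Real.sqrt (b p q u) : ℂ) • e (q, [(p, u)]) := by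
      rw [hom', hc, hadj_nil]; simp [actsOn]
    have h2 : om k p v (e (q, [(p, u)])) =
        (Real.sqrt (b k p v) : ℂ) • e (q, [(k, v), (p, u)]) := by
      rw [hom', hc, hadj_cons]; simp [actsOn, Ne.symm hkp]
    have h3 : om k p v (e (q, [(k, v), (p, u)])) =
        (Real.sqrt (b k p v) : ℂ) • e (q, [(p, u)]) := by
      rw [hom', hc, hadj_cons]; simp [actsOn, hkp]
    have h4 : om p q u (e (q, [(p, u)])) = (Real.sqrt (b p q u) : ℂ) • e (q, []) := by
      rw [hom', hc, hadj_cons]; simp [actsOn, hpq]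
    simp only [mul_apply_eq_comp, hpow, h1, map_smul, h2, h3, h4, inner_smul_right, hee,
      if_pos rfl, mul_one]
    have hx2 : Real.sqrt (b p q u) * Real.sqrt (b p q u) = b p q u :=
      Real.mul_self_sqrt (hb p q u)
    have hy2 : Real.sqrt (b k p v) * Real.sqrt (b k p v) = b k p v :=
      Real.mul_self_sqrt (hb k p v)
    have hre : Real.sqrt (b p q u) * (Real.sqrt (b k p v) * (Real.sqrt (b k p v) *
        (Real.sqrt (b k p v) * (Real.sqrt (b k p v) * Real.sqrt (b p q u))))) =
        (b k p v) ^ 2 * b p q u := by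
      calc Real.sqrt (b p q u) * (Real.sqrt (b k p v) * (Real.sqrt (b k p v) *
          (Real.sqrt (b k p v) * (Real.sqrt (b k p v) * Real.sqrt (b p q u))))) =
          (Real.sqrt (b p q u) * Real.sqrt (b p q u)) *
          ((Real.sqrt (b k p v) * Real.sqrt (b k p v)) *
          (Real.sqrt (b k p v) * Real.sqrt (b k p v))) := by ring
        _ = b p q u * (b k p v * b k p v) := by rw [hx2, hy2]
        _ = (b k p v) ^ 2 * b p q u := by ring
    norm_num
    exact_mod_cast congrArg (Complex.ofReal) hre
  · have d1 : om p p v (e (q, [(p, u)])) =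
        (Real.sqrt (b p p v) : ℂ) • e (q, [(p, v), (p, u)]) := by
      rw [hom', hc, hadj_cons]; simp [actsOn, Ne.symm hpq]
    have d2 : om p p v (e (q, [(p, v), (p, u)])) =
        (Real.sqrt (b p p v) : ℂ) • e (q, [(p, v), (p, v), (p, u)]) +
        (Real.sqrt (b p p v) : ℂ) • e (q, [(p, u)]) := by
      rw [hom', hc, hadj_cons]; simp [actsOn]
    have d3 : om p p v (e (q, [(p, v), (p, v), (p, u)])) =
        (Real.sqrt (b p p v) : ℂ) • e (q, [(p, v), (p, v), (p, v), (p, u)]) +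
        (Real.sqrt (b p p v) : ℂ) • e (q, [(p, v), (p, u)]) := by
      rw [hom', hc, hadj_cons]; simp [actsOn]
    have d4 : om p p v (e (q, [(p, v), (p, v), (p, v), (p, u)])) =
        (Real.sqrt (b p p v) : ℂ) • e (q, [(p, v), (p, v), (p, v), (p, v), (p, u)]) +
        (Real.sqrt (b p p v) : ℂ) • e (q, [(p, v), (p, v), (p, u)]) := by
      rw [hom', hc, hadj_cons]; simp [actsOn]
    have h1 : om p q u (e (q, [])) = (Real.sqrt (b p q u) : ℂ) • e (q, [(p, u)]) := by
      rw [hom', hc, hadj_nil]; simp [actsOn]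
    have f1 : om p q u (e (q, [(p, u)])) = (Real.sqrt (b p q u) : ℂ) • e (q, []) := by
      rw [hom', hc, hadj_cons]; simp [actsOn, hpq]
    have f3 : om p q u (e (q, [(p, v), (p, v), (p, u)])) = 0 := by
      rw [hom', hc, hadj_cons]; simp [actsOn, hpq]
    have f5 : om p q u (e (q, [(p, v), (p, v), (p, v), (p, v), (p, u)])) = 0 := by
      rw [hom', hc, hadj_cons]; simp [actsOn, hpq]
    simp only [mul_apply_eq_comp, hpow, h1, map_smul, map_add, d1, d2, d3, d4, smul_add,
      f1, f3, f5, smul_zero, add_zero, zero_add, inner_add_right, inner_smul_right, hee]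
    simp only [Prod.mk.injEq, List.cons.injEq, and_true, true_and, reduceCtorEq,
      and_false, if_false, if_true, mul_zero, add_zero, zero_add, mul_one, if_pos rfl]
    have hx2 : Real.sqrt (b p q u) * Real.sqrt (b p q u) = b p q u :=
      Real.mul_self_sqrt (hb p q u)
    have hy2 : Real.sqrt (b p p v) * Real.sqrt (b p p v) = b p p v :=
      Real.mul_self_sqrt (hb p p v)
    have hre : Real.sqrt (b p q u) * (Real.sqrt (b p p v) * (Real.sqrt (b p p v) *
        (Real.sqrt (b p p v) * (Real.sqrt (b p p v) * Real.sqrt (b p q u))))) +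
        Real.sqrt (b p q u) * (Real.sqrt (b p p v) * (Real.sqrt (b p p v) *
        (Real.sqrt (b p p v) * (Real.sqrt (b p p v) * Real.sqrt (b p q u))))) =
        2 * (b p p v) ^ 2 * b p q u := by
      calc Real.sqrt (b p q u) * (Real.sqrt (b p p v) * (Real.sqrt (b p p v) *
          (Real.sqrt (b p p v) * (Real.sqrt (b p p v) * Real.sqrt (b p q u))))) +
          Real.sqrt (b p q u) * (Real.sqrt (b p p v) * (Real.sqrt (b p p v) *
          (Real.sqrt (b p p v) * (Real.sqrt (b p p v) * Real.sqrt (b p q u))))) =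
          2 * ((Real.sqrt (b p q u) * Real.sqrt (b p q u)) *
          ((Real.sqrt (b p p v) * Real.sqrt (b p p v)) *
          (Real.sqrt (b p p v) * Real.sqrt (b p p v)))) := by ring
        _ = 2 * (b p q u * (b p p v * b p p v)) := by rw [hx2, hy2]
        _ = 2 * (b p p v) ^ 2 * b p q u := by ring
    exact_mod_cast congrArg (Complex.ofReal) hre
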